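/- Let V be a 2k-dimensional real vector space with almost complex structure J, and let ω₁, …, ω_g : V → ℂ be ℝ-linear maps of type (1,0), pairwise satisfying ωᵢ ∧ ωⱼ = 0, and not all zero. Then the common kernel ⋂ᵢ ker ωᵢ has real codimension exactly 2 in V. -/
import Mathlib


/-- On a `2k`-dimensional real vector space with almost complex structure `J`, a family
of type-`(1,0)` forms with pairwise vanishing wedges, not all zero, has common kernel of
real codimension exactly two. -/
theorem common_kernel_codim_two
    {V : Type*} [AddCommGroup V] [Module ℝ V] [FiniteDimensional ℝ V]
    (k g : ℕ) (hdim : Module.finrank ℝ V = 2 * k)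
    (J : V →ₗ[ℝ] V) (hJ : J ∘ₗ J = -LinearMap.id)
    (ω : Fin g → (V →ₗ[ℝ] ℂ))
    (hω : ∀ i, ∀ v, ω i (J v) = Complex.I * ω i v)
    (hwedge : ∀ i j, ∀ u v, ω i u * ω j v = ω i v * ω j u)
    (hne : ∃ i, ω i ≠ 0) :
    Module.finrank ℝ V = Module.finrank ℝ (⨅ i, LinearMap.ker (ω i) : Submodule ℝ V) + 2 := by
  obtain ⟨i₀, hi₀⟩ := hne
  obtain ⟨u, hu⟩ : ∃ u, ω i₀ u ≠ 0 := by
    by_contra h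
    push_neg at h
    exact hi₀ (LinearMap.ext fun v => by simpa using h v)
  have hker : (⨅ i, LinearMap.ker (ω i) : Submodule ℝ V) = LinearMap.ker (ω i₀) := by
    apply le_antisymm (iInf_le _ i₀)
    intro v hv
    rw [LinearMap.mem_ker] at hv
    rw [Submodule.mem_iInf]
    intro i
    rw [LinearMap.mem_ker]
    have h := hwedge i i₀ u v
    rw [hv, mul_zero] at h
    rcases mul_eq_zero.mp h.symm with h' | h'
    · exact h'
    · exact absurd h' hu
  have hrange : LinearMap.range (ω i₀) = ⊤ := by
    rw [Submodule.eq_top_iff']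
    intro w
    set z := ω i₀ u with hz
    refine ⟨(w / z).re • u + (w / z).im • (J u), ?_⟩
    rw [map_add, map_smul, map_smul, hω i₀ u]
    have : ((w / z).re : ℂ) • z + ((w / z).im : ℂ) • (Complex.I * z) = w := by
      have : (((w / z).re : ℂ) + (w / z).im * Complex.I) * z = w := by
        rw [Complex.re_add_im (w / z), div_mul_cancel₀ _ hu]
      calc ((w / z).re : ℂ) • z + ((w / z).im : ℂ) • (Complex.I * z)
          = (((w / z).re : ℂ) + (w / z).im * Complex.I) * z := by simp only [smul_eq_mul]; ring
        _ = w := this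
    simpa using this
  have h2 : Module.finrank ℝ ↥(LinearMap.range (ω i₀)) = 2 := by
    rw [hrange, finrank_top, Complex.finrank_real_complex]
  have h3 := LinearMap.finrank_range_add_finrank_ker (ω i₀)
  rw [hker]
  omega
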